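/- Let C be the block matrix with block structure C = [[F, H, H, ..., H],[L, C_0, C_1, ..., C_{k-1}],[L, C_{k-1}, C_0, ..., C_{k-2}],...,[L, C_1, C_2, ..., C_0]], where F is p×p, H is p×r, L is r×p, and each C_j is r×r. Let T = I_p ⊕ S where S is the block Fourier matrix with (p,q) block ω^{(p-1)(q-1)} I_r, ω = e^{2πi/k}. Then T^{-1} C T = [[F, kH],[L, B_0]] ⊕ B_1 ⊕ ... ⊕ B_{k-1}, where B_j = Σ_{m=0}^{k-1} ω^{jm} C_m; consequently σ(C) = σ([[F,kH],[L,B_0]]) ∪ σ(B_1) ∪ ... ∪ σ(B_{k-1}) as multisets. -/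

import Mathlib

open Matrix Polynomial Finset

private lemma aux_charpoly_similar {n : Type*} [Fintype n] [DecidableEq n]
    (P Q M : Matrix n n ℂ) (h1 : P * Q = 1) (h2 : Q * P = 1) :
    (Q * M * P).charpoly = M.charpoly := by
  have hQ' : (Q.map Polynomial.C) * (P.map Polynomial.C) = 1 := by
    rw [← Matrix.map_mul (f := (Polynomial.C : ℂ →+* ℂ[X])), h2,
      Matrix.map_one _ (map_zero _) (map_one _)]
  have key : charmatrix (Q * M * P) =
      Q.map Polynomial.C * charmatrix M * P.map Polynomial.C := by
    rw [charmatrix, charmatrix, RingHom.mapMatrix_apply, RingHom.mapMatrix_apply,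
      Matrix.mul_sub, Matrix.sub_mul,
      Matrix.map_mul (f := (Polynomial.C : ℂ →+* ℂ[X])),
      Matrix.map_mul (f := (Polynomial.C : ℂ →+* ℂ[X]))]
    congr 1
    rw [← (Matrix.scalar_commute (X : ℂ[X]) (Commute.all _) (Q.map Polynomial.C)).eq,
      mul_assoc, hQ', mul_one]
  have hdet : (Q.map Polynomial.C).det * (P.map Polynomial.C).det = 1 := by
    rw [← Matrix.det_mul, hQ', Matrix.det_one]
  rw [Matrix.charpoly, Matrix.charpoly, key, Matrix.det_mul, Matrix.det_mul]
  calc (Q.map Polynomial.C).det * (charmatrix M).det * (P.map Polynomial.C).det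
      = (charmatrix M).det * ((Q.map Polynomial.C).det * (P.map Polynomial.C).det) := by ring
    _ = (charmatrix M).det := by rw [hdet, mul_one]

private lemma aux_charpoly_blockDiagonal {o m : Type*} [Fintype o] [DecidableEq o]
    [Fintype m] [DecidableEq m] (M : o → Matrix m m ℂ) :
    (blockDiagonal M).charpoly = ∏ i, (M i).charpoly := by
  have h : charmatrix (blockDiagonal M) = blockDiagonal (fun i => charmatrix (M i)) := by
    ext ⟨a, i⟩ ⟨b, j⟩
    by_cases hij : i = j
    · subst hij
      by_cases hab : a = b
      · subst hab
        simp [blockDiagonal_apply]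
      · rw [charmatrix_apply_ne _ _ _ (by simp [Prod.ext_iff, hab])]
        simp [blockDiagonal_apply, charmatrix_apply_ne _ _ _ hab]
    · rw [charmatrix_apply_ne _ _ _ (by simp [Prod.ext_iff, hij])]
      simp [blockDiagonal_apply, hij]
  rw [Matrix.charpoly, h, det_blockDiagonal]
  rfl

private def auxEquiv (p k r : ℕ) (z0 : Fin k) :
    ((Fin p ⊕ Fin r) ⊕ Fin r × {x : Fin k // x ≠ z0}) ≃ (Fin p ⊕ Fin k × Fin r) where
  toFun x := match x with
    | Sum.inl (Sum.inl a) => Sum.inl a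
    | Sum.inl (Sum.inr i) => Sum.inr (z0, i)
    | Sum.inr (i, t) => Sum.inr (t.val, i)
  invFun x := match x with
    | Sum.inl a => Sum.inl (Sum.inl a)
    | Sum.inr (t, i) => if h : t = z0 then Sum.inl (Sum.inr i) else Sum.inr (i, ⟨t, h⟩)
  left_inv := by
    rintro ((a | i) | ⟨i, t⟩)
    · rfl
    · simp
    · simp [t.prop]
  right_inv := by
    rintro (a | ⟨t, i⟩)
    · rfl
    · by_cases h : t = z0 <;> simp [h]

private lemma auxEquiv_symm_inl {p k r : ℕ} (z0 : Fin k) (a : Fin p) :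
    (auxEquiv p k r z0).symm (Sum.inl a) = Sum.inl (Sum.inl a) := rfl

private lemma auxEquiv_symm_inr {p k r : ℕ} (z0 : Fin k) (t : Fin k) (i : Fin r) :
    (auxEquiv p k r z0).symm (Sum.inr (t, i)) =
      if h : t = z0 then Sum.inl (Sum.inr i) else Sum.inr (i, ⟨t, h⟩) := rfl

theorem bordered_block_circulant_decomposition
    (p k r : ℕ) (hk : 0 < k)
    (F : Matrix (Fin p) (Fin p) ℂ) (H : Matrix (Fin p) (Fin r) ℂ)
    (L : Matrix (Fin r) (Fin p) ℂ)
    (Cblk : Fin k → Matrix (Fin r) (Fin r) ℂ)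
    (C : Matrix (Fin p ⊕ Fin k × Fin r) (Fin p ⊕ Fin k × Fin r) ℂ)
    (hCF : ∀ a b, C (Sum.inl a) (Sum.inl b) = F a b)
    (hCH : ∀ a (t : Fin k) (j : Fin r), C (Sum.inl a) (Sum.inr (t, j)) = H a j)
    (hCL : ∀ (s : Fin k) (i : Fin r) b, C (Sum.inr (s, i)) (Sum.inl b) = L i b)
    (hCC : ∀ (s t : Fin k) (i j : Fin r),
      C (Sum.inr (s, i)) (Sum.inr (t, j)) = Cblk (t - s) i j)
    (ω : ℂ) (hω : ω = Complex.exp (2 * Real.pi * Complex.I / k))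
    (T : Matrix (Fin p ⊕ Fin k × Fin r) (Fin p ⊕ Fin k × Fin r) ℂ)
    (hT1 : ∀ a b, T (Sum.inl a) (Sum.inl b) = if a = b then 1 else 0)
    (hT2 : ∀ a x, T (Sum.inl a) (Sum.inr x) = 0)
    (hT3 : ∀ x b, T (Sum.inr x) (Sum.inl b) = 0)
    (hT4 : ∀ (q q' : Fin k) (i j : Fin r),
      T (Sum.inr (q, i)) (Sum.inr (q', j)) =
        ω ^ (q.val * q'.val) * (if i = j then 1 else 0))
    (B : Fin k → Matrix (Fin r) (Fin r) ℂ)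
    (hB : ∀ jj : Fin k, B jj = ∑ m : Fin k, ω ^ (jj.val * m.val) • Cblk m) :
    (∀ a b, (T⁻¹ * C * T) (Sum.inl a) (Sum.inl b) = F a b) ∧
    (∀ a (t : Fin k) (j : Fin r), (T⁻¹ * C * T) (Sum.inl a) (Sum.inr (t, j)) =
      if t = (⟨0, hk⟩ : Fin k) then (k : ℂ) * H a j else 0) ∧
    (∀ (s : Fin k) (i : Fin r) b, (T⁻¹ * C * T) (Sum.inr (s, i)) (Sum.inl b) =
      if s = (⟨0, hk⟩ : Fin k) then L i b else 0) ∧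
    (∀ (s t : Fin k) (i j : Fin r), (T⁻¹ * C * T) (Sum.inr (s, i)) (Sum.inr (t, j)) =
      if s = t then B s i j else 0) ∧
    C.charpoly.roots =
      (Matrix.fromBlocks F ((k : ℂ) • H) L (B ⟨0, hk⟩)).charpoly.roots +
        ∑ jj ∈ univ.erase (⟨0, hk⟩ : Fin k), (B jj).charpoly.roots := by
  haveI : NeZero k := ⟨hk.ne'⟩
  have hk0 : (k : ℂ) ≠ 0 := Nat.cast_ne_zero.mpr hk.ne'
  have hprim : IsPrimitiveRoot ω k := hω ▸ Complex.isPrimitiveRoot_exp k hk.ne'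
  have hωk : ω ^ k = 1 := hprim.pow_eq_one
  have hmod : ∀ n : ℕ, ω ^ (n % k) = ω ^ n := by
    intro n
    conv_rhs => rw [← Nat.mod_add_div n k]
    rw [pow_add, pow_mul, hωk, one_pow, mul_one]
  have hsum : ∀ n : ℕ, ∑ q : Fin k, ω ^ (q.val * n) = if k ∣ n then (k : ℂ) else 0 := by
    intro n
    have hq : ∀ q : Fin k, ω ^ (q.val * n) = (ω ^ n) ^ q.val := fun q => by
      rw [← pow_mul, mul_comm]
    simp_rw [hq]
    rw [Fin.sum_univ_eq_sum_range (fun q => (ω ^ n) ^ q) k]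
    by_cases h : k ∣ n
    · obtain ⟨c, rfl⟩ := h
      rw [pow_mul, hωk, one_pow, if_pos (Dvd.intro c rfl)]
      simp
    · have hne : ω ^ n ≠ 1 := fun hc => h ((hprim.pow_eq_one_iff_dvd n).mp hc)
      rw [geom_sum_eq hne, ← pow_mul, mul_comm n k, pow_mul, hωk, one_pow, sub_self,
        zero_div, if_neg h]
  have hdvd : ∀ s t : Fin k, (k ∣ s.val + (k - 1) * t.val) ↔ s = t := by
    intro s t
    constructor
    · intro h
      have h4 : ((s.val + (k - 1) * t.val : ℕ) : ℤ) =
          ((s.val : ℤ) - t.val) + (k : ℤ) * t.val := by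
        push_cast [Nat.cast_sub (Nat.one_le_iff_ne_zero.mpr hk.ne')]
        ring
      have h2 : (k : ℤ) ∣ ((s.val : ℤ) - t.val) + (k : ℤ) * t.val := by
        rw [← h4]; exact_mod_cast Int.natCast_dvd_natCast.mpr h
      have h6 : (k : ℤ) ∣ ((s.val : ℤ) - t.val) := by
        have := h2.sub (dvd_mul_right (k : ℤ) (t.val : ℤ))
        simpa using this
      have h7 : ((s.val : ℤ) - t.val) = 0 := by
        refine Int.eq_zero_of_abs_lt_dvd h6 ?_
        have hs := s.isLt; have ht := t.isLt
        rw [abs_lt]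
        omega
      exact Fin.ext (by omega)
    · rintro rfl
      refine ⟨s.val, ?_⟩
      rw [Nat.sub_one_mul]
      have h := Nat.le_mul_of_pos_left s.val hk
      omega
  have horth : ∀ s t : Fin k,
      ∑ q : Fin k, ω ^ (q.val * (s.val + (k - 1) * t.val)) = if s = t then (k : ℂ) else 0 := by
    intro s t
    rw [hsum]
    exact if_congr (hdvd s t) rfl rfl
  -- the explicit inverse of T
  set Ti : Matrix (Fin p ⊕ Fin k × Fin r) (Fin p ⊕ Fin k × Fin r) ℂ :=
    Matrix.fromBlocks 1 0 0 (Matrix.of fun x y : Fin k × Fin r =>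
      (k : ℂ)⁻¹ * ω ^ ((k - 1) * (x.1.val * y.1.val)) * (if x.2 = y.2 then 1 else 0)) with hTi
  have hTi1 : ∀ a b, Ti (Sum.inl a) (Sum.inl b) = if a = b then 1 else 0 := by
    intro a b; simp [hTi, Matrix.one_apply]
  have hTi2 : ∀ a x, Ti (Sum.inl a) (Sum.inr x) = 0 := by
    intro a x; simp [hTi]
  have hTi3 : ∀ x b, Ti (Sum.inr x) (Sum.inl b) = 0 := by
    intro x b; simp [hTi]
  have hTi4 : ∀ (q q' : Fin k) (i j : Fin r), Ti (Sum.inr (q, i)) (Sum.inr (q', j)) =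
      (k : ℂ)⁻¹ * ω ^ ((k - 1) * (q.val * q'.val)) * (if i = j then 1 else 0) := by
    intro q q' i j; simp [hTi]
  -- T * Ti = 1
  have hTTi : T * Ti = 1 := by
    ext x y
    rw [Matrix.mul_apply, Fintype.sum_sum_type]
    match x, y with
    | Sum.inl a, Sum.inl b =>
      simp [hT1, hT2, hTi1, Matrix.one_apply, ite_mul, Finset.sum_ite_eq]
    | Sum.inl a, Sum.inr (q', j) =>
      simp [hT1, hT2, hTi2, Matrix.one_apply]
    | Sum.inr (q, i), Sum.inl b =>
      simp [hT3, hTi3, Matrix.one_apply]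
    | Sum.inr (q, i), Sum.inr (q', j) =>
      rw [Fintype.sum_prod_type]
      simp only [hT3, hTi3, mul_zero, zero_mul, Finset.sum_const_zero, zero_add]
      have hterm : ∀ (q'' : Fin k) (m : Fin r),
          T (Sum.inr (q, i)) (Sum.inr (q'', m)) * Ti (Sum.inr (q'', m)) (Sum.inr (q', j)) =
          if i = m then (if m = j then
            (k : ℂ)⁻¹ * ω ^ (q''.val * (q.val + (k - 1) * q'.val)) else 0) else 0 := by
        intro q'' m
        rw [hT4, hTi4]
        by_cases him : i = m
        · subst him
          by_cases hij : i = j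
          · subst hij
            simp only [eq_self_iff_true, if_true, mul_one]
            rw [show q''.val * (q.val + (k - 1) * q'.val)
              = q.val * q''.val + (k - 1) * (q''.val * q'.val) from by ring, pow_add]
            ring
          · simp [hij]
        · simp [him]
      simp_rw [hterm, Finset.sum_ite_eq, mem_univ, if_true]
      by_cases hij : i = j
      · subst hij
        simp only [eq_self_iff_true, if_true]
        rw [← Finset.mul_sum, horth q q', Matrix.one_apply]
        by_cases hq : q = q'
        · subst hq; simp [hk0]
        · have hne : (Sum.inr (q, i) : Fin p ⊕ Fin k × Fin r) ≠ Sum.inr (q', i) := by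
            simp [Prod.ext_iff, hq]
          simp [hq, hne]
      · simp only [if_neg hij, Finset.sum_const_zero]
        rw [Matrix.one_apply_ne (by simp [Prod.ext_iff, hij])]
  have hTinv : T⁻¹ = Ti := Matrix.inv_eq_right_inv hTTi
  have hTiT : Ti * T = 1 := mul_eq_one_comm.mp hTTi
  -- C * T entries
  have hCT_l : ∀ x b, (C * T) x (Sum.inl b) = C x (Sum.inl b) := by
    intro x b
    rw [Matrix.mul_apply, Fintype.sum_sum_type]
    simp [hT1, hT3, mul_ite, Finset.sum_ite_eq']
  have hCT_r : ∀ x (t : Fin k) (j : Fin r),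
      (C * T) x (Sum.inr (t, j)) = ∑ q : Fin k, C x (Sum.inr (q, j)) * ω ^ (q.val * t.val) := by
    intro x t j
    rw [Matrix.mul_apply, Fintype.sum_sum_type, Fintype.sum_prod_type]
    simp only [hT2, mul_zero, Finset.sum_const_zero, zero_add, hT4]
    refine Finset.sum_congr rfl fun q _ => ?_
    rw [Finset.sum_congr rfl fun m _ => show
      C x (Sum.inr (q, m)) * (ω ^ (q.val * t.val) * if m = j then 1 else 0)
        = if m = j then C x (Sum.inr (q, m)) * ω ^ (q.val * t.val) else 0 from by
        by_cases hmj : m = j <;> simp [hmj]]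
    rw [Finset.sum_ite_eq' univ j (fun m => C x (Sum.inr (q, m)) * ω ^ (q.val * t.val)),
      if_pos (mem_univ j)]
  -- rows of Ti * N
  have hrow1 : ∀ (N : Matrix (Fin p ⊕ Fin k × Fin r) (Fin p ⊕ Fin k × Fin r) ℂ) (a : Fin p) y,
      (Ti * N) (Sum.inl a) y = N (Sum.inl a) y := by
    intro N a y
    rw [Matrix.mul_apply, Fintype.sum_sum_type]
    simp [hTi1, hTi2, ite_mul, Finset.sum_ite_eq]
  have hrow2 : ∀ (N : Matrix (Fin p ⊕ Fin k × Fin r) (Fin p ⊕ Fin k × Fin r) ℂ)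
      (s : Fin k) (i : Fin r) y,
      (Ti * N) (Sum.inr (s, i)) y =
        ∑ q : Fin k, (k : ℂ)⁻¹ * ω ^ ((k - 1) * (s.val * q.val)) * N (Sum.inr (q, i)) y := by
    intro N s i y
    rw [Matrix.mul_apply, Fintype.sum_sum_type, Fintype.sum_prod_type]
    simp only [hTi3, zero_mul, Finset.sum_const_zero, zero_add, hTi4]
    refine Finset.sum_congr rfl fun q _ => ?_
    rw [Finset.sum_congr rfl fun m _ => show
      (k : ℂ)⁻¹ * ω ^ ((k - 1) * (s.val * q.val)) * (if i = m then 1 else 0) *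
          N (Sum.inr (q, m)) y
        = if i = m then (k : ℂ)⁻¹ * ω ^ ((k - 1) * (s.val * q.val)) * N (Sum.inr (q, m)) y
          else 0 from by by_cases him : i = m <;> simp [him]]
    rw [Finset.sum_ite_eq univ i
      (fun m => (k : ℂ)⁻¹ * ω ^ ((k - 1) * (s.val * q.val)) * N (Sum.inr (q, m)) y),
      if_pos (mem_univ i)]
  -- the four entry identities
  have h1 : ∀ a b, (Ti * (C * T)) (Sum.inl a) (Sum.inl b) = F a b := by
    intro a b
    rw [hrow1, hCT_l, hCF]
  have h2 : ∀ a (t : Fin k) (j : Fin r), (Ti * (C * T)) (Sum.inl a) (Sum.inr (t, j)) =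
      if t = (⟨0, hk⟩ : Fin k) then (k : ℂ) * H a j else 0 := by
    intro a t j
    rw [hrow1, hCT_r]
    simp_rw [hCH]
    rw [← Finset.mul_sum, hsum]
    have hiff : k ∣ t.val ↔ t = (⟨0, hk⟩ : Fin k) := by
      constructor
      · intro h
        exact Fin.ext (Nat.eq_zero_of_dvd_of_lt h t.isLt)
      · rintro rfl
        exact ⟨0, rfl⟩
    rw [if_congr hiff rfl rfl]
    by_cases ht : t = ⟨0, hk⟩ <;> simp [ht, mul_comm] <;>
      (have ht0 : t ≠ 0 := fun h0 => ht (h0.trans (Fin.ext (by simp))); simp [ht0])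
  have h3 : ∀ (s : Fin k) (i : Fin r) b, (Ti * (C * T)) (Sum.inr (s, i)) (Sum.inl b) =
      if s = (⟨0, hk⟩ : Fin k) then L i b else 0 := by
    intro s i b
    rw [hrow2]
    have hterm : ∀ q : Fin k,
        (k : ℂ)⁻¹ * ω ^ ((k - 1) * (s.val * q.val)) * (C * T) (Sum.inr (q, i)) (Sum.inl b) =
        (k : ℂ)⁻¹ * L i b *
          ω ^ (q.val * ((⟨0, hk⟩ : Fin k).val + (k - 1) * s.val)) := by
      intro q
      rw [hCT_l, hCL, show q.val * ((⟨0, hk⟩ : Fin k).val + (k - 1) * s.val)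
          = (k - 1) * (s.val * q.val) from by
        simp only [show ((⟨0, hk⟩ : Fin k)).val = 0 from rfl, zero_add]; ring]
      ring
    rw [Finset.sum_congr rfl fun q _ => hterm q, ← Finset.mul_sum, horth ⟨0, hk⟩ s]
    by_cases hs : s = ⟨0, hk⟩
    · rw [if_pos hs.symm, if_pos hs]
      field_simp
    · rw [if_neg (fun hc => hs hc.symm), if_neg hs, mul_zero]
  have h4 : ∀ (s t : Fin k) (i j : Fin r), (Ti * (C * T)) (Sum.inr (s, i)) (Sum.inr (t, j)) =
      if s = t then B s i j else 0 := by
    intro s t i j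
    rw [hrow2]
    have hin : ∀ q : Fin k, (C * T) (Sum.inr (q, i)) (Sum.inr (t, j)) =
        ∑ m : Fin k, Cblk m i j * (ω ^ (q.val + m.val)) ^ t.val := by
      intro q
      rw [hCT_r]
      refine (Fintype.sum_equiv (Equiv.addLeft q) _ _ fun m => ?_).symm
      rw [show Equiv.addLeft q m = q + m from rfl, hCC, add_sub_cancel_left,
        pow_mul, Fin.val_add, hmod]
    simp_rw [hin, Finset.mul_sum]
    rw [Finset.sum_comm]
    have hterm : ∀ (m q : Fin k),
        (k : ℂ)⁻¹ * ω ^ ((k - 1) * (s.val * q.val)) *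
          (Cblk m i j * (ω ^ (q.val + m.val)) ^ t.val) =
        (k : ℂ)⁻¹ * (Cblk m i j * ω ^ (t.val * m.val)) *
          ω ^ (q.val * (t.val + (k - 1) * s.val)) := by
      intro m q
      rw [← pow_mul]
      have hpow : ω ^ ((k - 1) * (s.val * q.val)) * ω ^ ((q.val + m.val) * t.val)
          = ω ^ (t.val * m.val) * ω ^ (q.val * (t.val + (k - 1) * s.val)) := by
        rw [← pow_add, ← pow_add]
        congr 1
        ring
      linear_combination ((k : ℂ)⁻¹ * Cblk m i j) * hpow
    simp_rw [hterm]
    have hq : ∀ m : Fin k,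
        ∑ q : Fin k, (k : ℂ)⁻¹ * (Cblk m i j * ω ^ (t.val * m.val)) *
            ω ^ (q.val * (t.val + (k - 1) * s.val)) =
        (k : ℂ)⁻¹ * (Cblk m i j * ω ^ (t.val * m.val)) * (if t = s then (k : ℂ) else 0) :=
      fun m => by rw [← Finset.mul_sum, horth t s]
    simp_rw [hq]
    by_cases hst : s = t
    · subst hst
      simp only [eq_self_iff_true, if_true]
      rw [hB]
      simp only [Matrix.sum_apply, Matrix.smul_apply, smul_eq_mul]
      refine Finset.sum_congr rfl fun m _ => ?_
      rw [mul_comm s.val m.val]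
      field_simp
    · rw [if_neg hst]
      simp [Ne.symm hst]
  -- assemble the entry claims
  have hMrw : T⁻¹ * C * T = Ti * (C * T) := by rw [hTinv, mul_assoc]
  refine ⟨fun a b => by rw [hMrw]; exact h1 a b,
          fun a t j => by rw [hMrw]; exact h2 a t j,
          fun s i b => by rw [hMrw]; exact h3 s i b,
          fun s t i j => by rw [hMrw]; exact h4 s t i j, ?_⟩
  -- the spectral decomposition
  have hsim : (Ti * (C * T)).charpoly = C.charpoly := by
    rw [← mul_assoc]
    exact aux_charpoly_similar T Ti C hTTi hTiT
  set z0 : Fin k := (⟨0, hk⟩ : Fin k) with hz0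
  set A : Matrix (Fin p ⊕ Fin r) (Fin p ⊕ Fin r) ℂ :=
    Matrix.fromBlocks F ((k : ℂ) • H) L (B z0) with hA
  set D : Matrix (Fin r × {x : Fin k // x ≠ z0}) (Fin r × {x : Fin k // x ≠ z0}) ℂ :=
    blockDiagonal (fun jj : {x : Fin k // x ≠ z0} => B jj.val) with hD
  set N := Matrix.fromBlocks A 0 0 D with hN
  have hMe : Ti * (C * T) = (reindex (auxEquiv p k r z0) (auxEquiv p k r z0)) N := by
    ext x y
    rw [reindex_apply, submatrix_apply]
    match x, y with
    | Sum.inl a, Sum.inl b =>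
      rw [h1, auxEquiv_symm_inl, auxEquiv_symm_inl, hN, hA]
      simp
    | Sum.inl a, Sum.inr (t, j) =>
      rw [h2, auxEquiv_symm_inl, auxEquiv_symm_inr]
      by_cases ht : t = z0
      · rw [dif_pos ht, if_pos ht, hN, hA]
        simp [mul_comm]
      · rw [dif_neg ht, if_neg ht, hN]
        simp
    | Sum.inr (s, i), Sum.inl b =>
      rw [h3, auxEquiv_symm_inr, auxEquiv_symm_inl]
      by_cases hs : s = z0
      · rw [dif_pos hs, if_pos hs, hN, hA]
        simp
      · rw [dif_neg hs, if_neg hs, hN]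
        simp
    | Sum.inr (s, i), Sum.inr (t, j) =>
      rw [h4, auxEquiv_symm_inr, auxEquiv_symm_inr]
      by_cases hs : s = z0 <;> by_cases ht : t = z0
      · rw [dif_pos hs, dif_pos ht, if_pos (hs.trans ht.symm), hN, hA]
        rw [hs]
        simp
      · rw [dif_pos hs, dif_neg ht, if_neg (fun hc => ht (hc.symm.trans hs)), hN]
        simp
      · rw [dif_neg hs, dif_pos ht, if_neg (fun hc => hs (hc.trans ht)), hN]
        simp
      · rw [dif_neg hs, dif_neg ht, hN, hD]
        by_cases hst : s = t
        · subst hst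
          simp [blockDiagonal_apply]
        · have : (⟨s, hs⟩ : {x : Fin k // x ≠ z0}) ≠ ⟨t, ht⟩ := by
            simp [Subtype.ext_iff, hst]
          simp [blockDiagonal_apply, hst, this]
  have hchar : C.charpoly =
      A.charpoly * ∏ jj : {x : Fin k // x ≠ z0}, (B jj.val).charpoly := by
    rw [← hsim, hMe, Matrix.charpoly_reindex, hN, Matrix.charpoly_fromBlocks_zero₁₂, hD,
      aux_charpoly_blockDiagonal]
  have hA0 : A.charpoly ≠ 0 := A.charpoly_monic.ne_zero
  have hP : (∏ jj : {x : Fin k // x ≠ z0}, (B jj.val).charpoly) ≠ 0 :=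
    Finset.prod_ne_zero_iff.mpr fun jj _ => (B jj.val).charpoly_monic.ne_zero
  rw [hchar, Polynomial.roots_mul (mul_ne_zero hA0 hP)]
  congr 1
  rw [Polynomial.roots_prod (fun jj : {x : Fin k // x ≠ z0} => (B jj.val).charpoly) univ hP]
  rw [show ((univ : Finset {x : Fin k // x ≠ z0}).val.bind fun jj =>
      ((B jj.val).charpoly.roots)) =
    ∑ jj : {x : Fin k // x ≠ z0}, (B jj.val).charpoly.roots from rfl]
  exact (Finset.sum_subtype (univ.erase z0)
    (fun x => by simp [Finset.mem_erase]) (fun jj => (B jj).charpoly.roots)).symm
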